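/- If P and Q are product distributions on {0,1}^d with mean vectors p, q ∈ [τ, 1−τ]^d for 0 < τ ≤ 1/2, then the total variation distance satisfies d_TV(P,Q) ≤ ‖p−q‖₂ / √τ. -/

import Mathlib

open Finset Real

/-- PMF of the product of Bernoulli distributions on {0,1}^d. -/
noncomputable def prodPMF {d : ℕ} (p : Fin d → ℝ) (x : Fin d → Bool) : ℝ :=
  ∏ i, if x i then p i else 1 - p i

/-- Total variation distance between two product Bernoulli distributions on {0,1}^d. -/
noncomputable def tvProd {d : ℕ} (p q : Fin d → ℝ) : ℝ :=
  (1/2) * ∑ x : Fin d → Bool, |prodPMF p x - prodPMF q x|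

private lemma sum_over_bool_fun {d : ℕ} (f : Fin d → Bool → ℝ) :
    ∑ x : Fin d → Bool, ∏ i, f i (x i) = ∏ i, ∑ b : Bool, f i b := by
  rw [Finset.prod_univ_sum]
  apply Finset.sum_congr
  · ext x; simp
  · intros; rfl

private lemma sqrt_prod {d : ℕ} (f : Fin d → ℝ) (hf : ∀ i, 0 ≤ f i) :
    Real.sqrt (∏ i, f i) = ∏ i, Real.sqrt (f i) := by
  have h1 : ∏ i, f i = (∏ i, Real.sqrt (f i))^2 := by
    rw [← Finset.prod_pow]
    exact Finset.prod_congr rfl fun i _ => (Real.sq_sqrt (hf i)).symm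
  rw [h1, Real.sqrt_sq (Finset.prod_nonneg fun i _ => Real.sqrt_nonneg _)]

private lemma weierstrass {ι : Type*} [DecidableEq ι] (s : Finset ι) (f : ι → ℝ)
    (h0 : ∀ i, 0 ≤ f i) (h1 : ∀ i, f i ≤ 1) :
    1 - ∑ i ∈ s, (1 - f i) ≤ ∏ i ∈ s, f i := by
  induction s using Finset.induction_on with
  | empty => simp
  | @insert a s ha ih =>
    rw [Finset.sum_insert ha, Finset.prod_insert ha]
    have hs : 0 ≤ ∑ i ∈ s, (1 - f i) := Finset.sum_nonneg fun i _ => by linarith [h1 i]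
    nlinarith [h0 a, h1 a]

set_option maxHeartbeats 800000 in
theorem stmt2 {d : ℕ} (τ : ℝ) (p q : Fin d → ℝ) (hτ0 : 0 < τ) (hτ : τ ≤ 1/2)
    (hp : ∀ i, τ ≤ p i ∧ p i ≤ 1 - τ) (hq : ∀ i, τ ≤ q i ∧ q i ≤ 1 - τ) :
    tvProd p q ≤ Real.sqrt (∑ i, (p i - q i)^2) / Real.sqrt τ := by
  have hp0 : ∀ i (x : Bool), 0 ≤ (if x then p i else 1 - p i) := fun i x => by
    rcases hp i with ⟨h1, h2⟩; cases x <;> simp <;> linarith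
  have hq0 : ∀ i (x : Bool), 0 ≤ (if x then q i else 1 - q i) := fun i x => by
    rcases hq i with ⟨h1, h2⟩; cases x <;> simp <;> linarith
  have hP0 : ∀ x, 0 ≤ prodPMF p x := fun x =>
    Finset.prod_nonneg fun i _ => hp0 i (x i)
  have hQ0 : ∀ x, 0 ≤ prodPMF q x := fun x =>
    Finset.prod_nonneg fun i _ => hq0 i (x i)
  -- sums equal 1
  have hPsum : ∑ x : Fin d → Bool, prodPMF p x = 1 := by
    unfold prodPMF
    exact (sum_over_bool_fun (fun i b => if b then p i else 1 - p i)).trans (by simp)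
  have hQsum : ∑ x : Fin d → Bool, prodPMF q x = 1 := by
    unfold prodPMF
    exact (sum_over_bool_fun (fun i b => if b then q i else 1 - q i)).trans (by simp)
  -- Bhattacharyya coefficient
  set BC : Fin d → ℝ := fun i =>
    Real.sqrt (p i * q i) + Real.sqrt ((1 - p i) * (1 - q i)) with hBCdef
  have hBsum : ∑ x : Fin d → Bool, Real.sqrt (prodPMF p x * prodPMF q x) = ∏ i, BC i := by
    have h1 : ∀ x : Fin d → Bool, Real.sqrt (prodPMF p x * prodPMF q x)
        = ∏ i, Real.sqrt ((if x i then p i else 1 - p i) * (if x i then q i else 1 - q i)) := by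
      intro x
      unfold prodPMF
      rw [← Finset.prod_mul_distrib, _root_.sqrt_prod]
      intro i; exact mul_nonneg (hp0 i (x i)) (hq0 i (x i))
    rw [Finset.sum_congr rfl fun x _ => h1 x]
    refine (sum_over_bool_fun
      (fun i b => Real.sqrt ((if b then p i else 1 - p i) * (if b then q i else 1 - q i)))).trans ?_
    apply Finset.prod_congr rfl
    intro i _
    simp [hBCdef, add_comm]
  set B : ℝ := ∏ i, BC i with hBdef
  -- per-pair sqrt bound
  have hs : ∀ a b : ℝ, τ ≤ a → τ ≤ b → (Real.sqrt a - Real.sqrt b)^2 ≤ (a - b)^2 / (4 * τ) := by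
    intro a b ha hb
    have ha0 : (0:ℝ) ≤ a := le_trans hτ0.le ha
    have hb0 : (0:ℝ) ≤ b := le_trans hτ0.le hb
    have h1 : Real.sqrt τ ≤ Real.sqrt a := Real.sqrt_le_sqrt ha
    have h2 : Real.sqrt τ ≤ Real.sqrt b := Real.sqrt_le_sqrt hb
    have hτs : Real.sqrt τ ^ 2 = τ := Real.sq_sqrt hτ0.le
    have key : (Real.sqrt a - Real.sqrt b) * (Real.sqrt a + Real.sqrt b) = a - b := by
      have e1 := Real.sq_sqrt ha0
      have e2 := Real.sq_sqrt hb0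
      nlinarith [e1, e2]
    rw [le_div_iff₀ (by positivity)]
    have h4 : 4 * τ ≤ (Real.sqrt a + Real.sqrt b)^2 := by nlinarith [Real.sqrt_nonneg τ]
    nlinarith [key, h4, sq_nonneg (Real.sqrt a - Real.sqrt b)]
  -- per-coordinate Hellinger bound
  have hBC1 : ∀ i, 1 - BC i ≤ (p i - q i)^2 / (4 * τ) := by
    intro i
    rcases hp i with ⟨hp1, hp2⟩
    rcases hq i with ⟨hq1, hq2⟩
    have A := hs (p i) (q i) hp1 hq1
    have B2 := hs (1 - p i) (1 - q i) (by linarith) (by linarith)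
    have e1 : Real.sqrt (p i * q i) = Real.sqrt (p i) * Real.sqrt (q i) :=
      Real.sqrt_mul (by linarith) _
    have e2 : Real.sqrt ((1 - p i) * (1 - q i)) = Real.sqrt (1 - p i) * Real.sqrt (1 - q i) :=
      Real.sqrt_mul (by linarith) _
    have s1 : Real.sqrt (p i) ^ 2 = p i := Real.sq_sqrt (by linarith)
    have s2 : Real.sqrt (q i) ^ 2 = q i := Real.sq_sqrt (by linarith)
    have s3 : Real.sqrt (1 - p i) ^ 2 = 1 - p i := Real.sq_sqrt (by linarith)
    have s4 : Real.sqrt (1 - q i) ^ 2 = 1 - q i := Real.sq_sqrt (by linarith)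
    have hBCi : BC i = Real.sqrt (p i) * Real.sqrt (q i)
        + Real.sqrt (1 - p i) * Real.sqrt (1 - q i) := by rw [hBCdef]; simp [e1, e2]
    rw [hBCi]
    have hd : ((1 - p i) - (1 - q i))^2 = (p i - q i)^2 := by ring
    rw [hd] at B2
    nlinarith [A, B2, s1, s2, s3, s4]
  -- BC bounds
  have am : ∀ a b : ℝ, 0 ≤ a → 0 ≤ b → Real.sqrt (a * b) ≤ (a + b) / 2 := by
    intro a b ha hb
    rw [show (a + b)/2 = Real.sqrt (((a + b)/2)^2) from (Real.sqrt_sq (by linarith)).symm]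
    apply Real.sqrt_le_sqrt
    nlinarith [sq_nonneg (a - b)]
  have hBC0 : ∀ i, 0 ≤ BC i := fun i => by
    rw [hBCdef]; positivity
  have hBCle1 : ∀ i, BC i ≤ 1 := by
    intro i
    rcases hp i with ⟨hp1, hp2⟩
    rcases hq i with ⟨hq1, hq2⟩
    have a1 := am (p i) (q i) (by linarith) (by linarith)
    have a2 := am (1 - p i) (1 - q i) (by linarith) (by linarith)
    rw [hBCdef]
    dsimp only
    linarith
  have hB0 : 0 ≤ B := Finset.prod_nonneg fun i _ => hBC0 i
  have hB1 : B ≤ 1 := Finset.prod_le_one (fun i _ => hBC0 i) (fun i _ => hBCle1 i)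
  set S : ℝ := ∑ i, (p i - q i)^2 with hSdef
  have hS0 : 0 ≤ S := Finset.sum_nonneg fun i _ => sq_nonneg _
  have hWB : 1 - B ≤ S / (4 * τ) := by
    have w := weierstrass Finset.univ BC hBC0 hBCle1
    have hsum : ∑ i, (1 - BC i) ≤ S / (4 * τ) := by
      rw [hSdef, Finset.sum_div]
      exact Finset.sum_le_sum fun i _ => hBC1 i
    linarith
  -- Cauchy-Schwarz step
  set F : (Fin d → Bool) → ℝ := fun x => Real.sqrt (prodPMF p x) with hFdef
  set G : (Fin d → Bool) → ℝ := fun x => Real.sqrt (prodPMF q x) with hGdef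
  have hF2 : ∑ x : Fin d → Bool, F x ^ 2 = 1 :=
    (Finset.sum_congr rfl fun x _ => Real.sq_sqrt (hP0 x)).trans hPsum
  have hG2 : ∑ x : Fin d → Bool, G x ^ 2 = 1 :=
    (Finset.sum_congr rfl fun x _ => Real.sq_sqrt (hQ0 x)).trans hQsum
  have hFGsum : ∑ x : Fin d → Bool, F x * G x = B :=
    (Finset.sum_congr rfl fun x _ => (Real.sqrt_mul (hP0 x) _).symm).trans hBsum
  have habs : ∀ x : Fin d → Bool,
      |prodPMF p x - prodPMF q x| = |F x - G x| * (F x + G x) := by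
    intro x
    have e1 : F x ^ 2 = prodPMF p x := Real.sq_sqrt (hP0 x)
    have e2 : G x ^ 2 = prodPMF q x := Real.sq_sqrt (hQ0 x)
    have hFG0 : 0 ≤ F x + G x := by positivity
    rw [← abs_of_nonneg hFG0, ← abs_mul]
    congr 1
    linear_combination e2 - e1
  have e3 : ∑ x : Fin d → Bool, (F x - G x)^2 = 2 - 2 * B := by
    have h : ∀ x : Fin d → Bool, (F x - G x)^2 = (F x^2 + G x^2) - 2*(F x * G x) :=
      fun x => by ring
    rw [Finset.sum_congr rfl fun x _ => h x, Finset.sum_sub_distrib,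
      Finset.sum_add_distrib, ← Finset.mul_sum, hF2, hG2, hFGsum]
    ring
  have e4 : ∑ x : Fin d → Bool, (F x + G x)^2 = 2 + 2 * B := by
    have h : ∀ x : Fin d → Bool, (F x + G x)^2 = (F x^2 + G x^2) + 2*(F x * G x) :=
      fun x => by ring
    rw [Finset.sum_congr rfl fun x _ => h x, Finset.sum_add_distrib,
      Finset.sum_add_distrib, ← Finset.mul_sum, hF2, hG2, hFGsum]
    ring
  have CS := Finset.sum_mul_sq_le_sq_mul_sq Finset.univ
    (fun x : Fin d → Bool => |F x - G x|) (fun x => F x + G x)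
  simp only [sq_abs] at CS
  have key : (∑ x : Fin d → Bool, |prodPMF p x - prodPMF q x|)^2 ≤ (2 - 2*B) * (2 + 2*B) := by
    rw [Finset.sum_congr rfl fun x _ => habs x]
    calc (∑ x : Fin d → Bool, |F x - G x| * (F x + G x))^2
        ≤ (∑ x : Fin d → Bool, (F x - G x)^2) * (∑ x : Fin d → Bool, (F x + G x)^2) := CS
      _ = (2 - 2*B) * (2 + 2*B) := by rw [e3, e4]
  -- conclude
  clear_value B S F G
  have htv0 : 0 ≤ tvProd p q :=
    mul_nonneg (by norm_num) (Finset.sum_nonneg fun x _ => abs_nonneg _)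
  have hWB3 : (4*τ) * (1 - B) ≤ S := by
    calc (4*τ)*(1-B) ≤ (4*τ)*(S/(4*τ)) := by
          exact mul_le_mul_of_nonneg_left hWB (by positivity)
      _ = S := by field_simp
  clear hp0 hq0 hP0 hQ0 hPsum hQsum hBsum hF2 hG2 hFGsum habs e3 e4 CS hBC1 hBC0 hBCle1 hs am hBCdef hFdef hGdef hBdef
  obtain ⟨A, hA0, hkeyA, htvA⟩ : ∃ A : ℝ, 0 ≤ A ∧ A^2 ≤ (2-2*B)*(2+2*B) ∧ tvProd p q = (1/2)*A :=
    ⟨_, Finset.sum_nonneg fun x _ => abs_nonneg _, key, rfl⟩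
  clear key
  have hsq : tvProd p q ^ 2 ≤ S / τ := by
    have h1B : (2 - 2*B)*(2 + 2*B) ≤ 8*(1 - B) := by linarith [sq_nonneg (1-B)]
    have h2 : 2*(1 - B) ≤ S/(2*τ) := by
      rw [le_div_iff₀ (by positivity)]
      nlinarith
    have h3 : S/(2*τ) ≤ S/τ :=
      div_le_div_of_nonneg_left hS0 hτ0 (by linarith)
    rw [htvA]
    nlinarith [hkeyA, hA0]
  have hfin : tvProd p q ≤ Real.sqrt (S / τ) :=
    calc tvProd p q = Real.sqrt (tvProd p q ^2) := (Real.sqrt_sq htv0).symm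
      _ ≤ Real.sqrt (S/τ) := Real.sqrt_le_sqrt hsq
  rw [← Real.sqrt_div hS0]
  exact hfin
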